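/- Let Γ be a connected δ-regular graph on n vertices with diameter D = d (spectrally maximum diameter), distinct eigenvalues λ_0 > ... > λ_d, and π_0 = Π_{i=1}^d (λ_0 − λ_i). Then for every pair of vertices u,v at distance d and every ℓ ≥ 0, the number of walks (A^ℓ)_{uv} depends only on ℓ; in particular the number of walks of length d between vertices at distance d equals π_0/n. -/

import Mathlib

open Matrix Polynomial Finset

section aux
variable {n R : Type*} [Fintype n] [DecidableEq n] [CommRing R]

lemma matrix_aeval_conj (U W D : Matrix n n R) (h1 : U * W = 1) (h2 : W * U = 1)
    (p : R[X]) : aeval (U * D * W) p = U * aeval D p * W := by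
  have hpow : ∀ k : ℕ, (U * D * W) ^ k = U * D ^ k * W := by
    intro k
    induction k with
    | zero => simpa using h1.symm
    | succ k ih =>
      rw [pow_succ, ih]
      calc U * D ^ k * W * (U * D * W) = U * D ^ k * ((W * U) * (D * W)) := by
            simp only [mul_assoc]
        _ = U * D ^ (k+1) * W := by rw [h2, one_mul, pow_succ]; simp only [mul_assoc]
  simp only [aeval_eq_sum_range, Finset.mul_sum, Finset.sum_mul]
  exact Finset.sum_congr rfl fun k _ => by rw [hpow, mul_smul_comm, smul_mul_assoc]

lemma matrix_aeval_diagonal (f : n → R) (p : R[X]) :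
    aeval (diagonal f) p = diagonal fun i => p.eval (f i) := by
  induction p using Polynomial.induction_on' with
  | add p q hp hq =>
    rw [map_add, hp, hq, diagonal_add]
    congr; funext i; simp
  | monomial k a =>
    rw [aeval_monomial, diagonal_pow, Matrix.algebraMap_eq_diagonal, diagonal_mul_diagonal]
    congr; funext i; simp [eval_monomial]

end aux

/-- Let `Γ` be a connected `δ`-regular graph on `n` vertices with
spectrally maximum diameter `D = d`. Then for vertices `u, v` at distance `d`, the
number of walks `(A^ℓ)_{uv}` depends only on `ℓ`; in particular the number of walks of
length `d` between vertices at distance `d` equals `π₀/n`. -/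
theorem stmt_16 {V : Type*} [Fintype V] [DecidableEq V]
    (G : SimpleGraph V) [DecidableRel G.Adj]
    (δ : ℕ) (hreg : G.IsRegularOfDegree δ) (hconn : G.Connected)
    (D : ℕ) (hD1 : ∀ u v : V, G.dist u v ≤ D) (hD2 : ∃ u v : V, G.dist u v = D)
    (d : ℕ) (hDd : D = d)
    (lam : Fin (d + 1) → ℝ) (hlam : StrictAnti lam) (hlam0 : lam 0 = δ)
    (m : Fin (d + 1) → ℕ) (hmpos : ∀ i, 0 < m i)
    (hchar : Matrix.charpoly (G.adjMatrix ℝ) =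
      ∏ i, (Polynomial.X - Polynomial.C (lam i)) ^ (m i))
    (n : ℕ) (hn : n = Fintype.card V)
    (π₀ : ℝ) (hπ₀ : π₀ = ∏ i : Fin d, (lam 0 - lam i.succ)) :
    (∀ (ℓ : ℕ) (u v u' v' : V), G.dist u v = d → G.dist u' v' = d →
      ((G.adjMatrix ℝ) ^ ℓ) u v = ((G.adjMatrix ℝ) ^ ℓ) u' v') ∧
    (∀ u v : V, G.dist u v = d →
      ((G.adjMatrix ℝ) ^ d) u v = π₀ / (n : ℝ)) := by
  classical
  obtain ⟨u₀, v₀, huv₀⟩ := hD2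
  haveI : Nonempty V := ⟨u₀⟩
  set A : Matrix V V ℝ := G.adjMatrix ℝ with hAdef
  have hA : A.IsHermitian := by
    show Aᴴ = A
    ext i j
    simp [hAdef, Matrix.conjTranspose_apply, SimpleGraph.adjMatrix_apply, G.adj_comm]
  set P : ℝ[X] := ∏ i : Fin d, (X - C (lam i.succ)) with hPdef
  set Q : ℝ[X] := ∏ i : Fin (d+1), (X - C (lam i)) with hQdef
  have hQP : Q = (X - C (lam 0)) * P := by
    rw [hQdef, Fin.prod_univ_succ]
  have hPmonic : P.Monic := monic_prod_of_monic _ _ fun i _ => monic_X_sub_C _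
  have hQmonic : Q.Monic := monic_prod_of_monic _ _ fun i _ => monic_X_sub_C _
  have hPdeg : P.natDegree = d := by
    rw [hPdef, natDegree_prod _ _ fun i _ => X_sub_C_ne_zero _]
    simp [natDegree_X_sub_C]
  have hQdeg : Q.natDegree = d + 1 := by
    rw [hQdef, natDegree_prod _ _ fun i _ => X_sub_C_ne_zero _]
    simp [natDegree_X_sub_C]
  -- every eigenvalue of A is a root of Q
  have hroot : ∀ μ : ℝ, (∃ w : V → ℝ, w ≠ 0 ∧ A *ᵥ w = μ • w) → Q.eval μ = 0 := by
    rintro μ ⟨w, hw0, hww⟩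
    have hdet : (Matrix.scalar V μ - A).det = 0 := by
      rw [← Matrix.exists_mulVec_eq_zero_iff]
      refine ⟨w, hw0, ?_⟩
      rw [Matrix.sub_mulVec, hww]
      funext i
      simp [Matrix.scalar_apply, Matrix.mulVec_diagonal]
    have hcp : A.charpoly.eval μ = 0 := by
      rw [Matrix.charpoly, eval_det, matPolyEquiv_charmatrix]
      simpa using hdet
    rw [hchar] at hcp
    simp only [eval_prod, eval_pow, eval_sub, eval_X, eval_C] at hcp
    obtain ⟨i, -, hi⟩ := Finset.prod_eq_zero_iff.mp hcp
    have hμ : μ = lam i := by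
      have := (pow_eq_zero_iff (hmpos i).ne').mp hi
      linarith [sub_eq_zero.mp this]
    rw [hQdef]
    simp only [eval_prod, eval_sub, eval_X, eval_C]
    exact Finset.prod_eq_zero (Finset.mem_univ i) (by rw [hμ, sub_self])
  have hQA : aeval A Q = 0 := by
    have hU := (Matrix.IsHermitian.eigenvectorUnitary hA).2
    set U : Matrix V V ℝ := (Matrix.IsHermitian.eigenvectorUnitary hA : Matrix V V ℝ) with hUdef
    have h1 : U * star U = 1 := Matrix.mem_unitaryGroup_iff.mp hU
    have h2 : star U * U = 1 := Matrix.mem_unitaryGroup_iff'.mp hU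
    have heig : ∀ i, Q.eval (hA.eigenvalues i) = 0 := by
      intro i
      apply hroot
      refine ⟨⇑(hA.eigenvectorBasis i), ?_, hA.mulVec_eigenvectorBasis i⟩
      exact fun h => hA.eigenvectorBasis.orthonormal.ne_zero i (by ext x; exact congrFun h x)
    calc aeval A Q
        = aeval (U * diagonal (RCLike.ofReal ∘ hA.eigenvalues) * star U) Q := by
          conv_lhs => rw [hA.spectral_theorem, Unitary.conjStarAlgAut_apply]
      _ = U * diagonal (fun i => Q.eval ((RCLike.ofReal ∘ hA.eigenvalues) i)) * star U := by
          rw [matrix_aeval_conj _ _ _ h1 h2, matrix_aeval_diagonal]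
      _ = 0 := by
          have hz : (fun i => Q.eval ((RCLike.ofReal ∘ hA.eigenvalues) i)) = fun _ => 0 := by
            funext i
            simpa [RCLike.ofReal_real_eq_id] using heig i
          rw [hz, diagonal_zero, mul_zero, zero_mul]
  set B : Matrix V V ℝ := aeval A P with hBdef
  have hAB : A * B = lam 0 • B := by
    have h : aeval A ((X - C (lam 0)) * P) = 0 := by rw [← hQP]; exact hQA
    rw [_root_.map_mul, map_sub, aeval_X, aeval_C, sub_mul, sub_eq_zero] at h
    rw [Algebra.smul_def]
    exact h
  have hBA : B * A = A * B := by
    calc B * A = aeval A (P * X) := by rw [_root_.map_mul, aeval_X]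
      _ = aeval A (X * P) := by rw [mul_comm]
      _ = A * B := by rw [_root_.map_mul, aeval_X]
  -- eigenvectors of eigenvalue δ are constant
  have hcol : ∀ x : V → ℝ, A *ᵥ x = lam 0 • x → ∀ i j : V, x i = x j := by
    intro x hx i j
    have hlap : G.lapMatrix ℝ *ᵥ x = 0 := by
      funext v
      rw [Pi.zero_apply, SimpleGraph.lapMatrix_mulVec_apply]
      have h1 : (A *ᵥ x) v = lam 0 * x v := by rw [hx]; rfl
      rw [hAdef, SimpleGraph.adjMatrix_mulVec_apply] at h1
      rw [hreg v, h1, hlam0]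
      ring
    have := (G.lapMatrix_mulVec_eq_zero_iff_forall_reachable (x := x)).mp
      hlap
    exact this i j (hconn.preconnected i j)
  have hAsymm : ∀ a b : V, A a b = A b a := by
    intro a b
    simp [hAdef, SimpleGraph.adjMatrix_apply, G.adj_comm]
  have hconst : ∀ u v u' v' : V, B u v = B u' v' := by
    intro u v u' v'
    have hcolv : B u v = B u' v := by
      refine hcol (fun w => B w v) ?_ u u'
      funext w
      have h : (A * B) w v = (lam 0 • B) w v := by rw [hAB]
      simpa [Matrix.mul_apply, Matrix.mulVec, dotProduct, Matrix.smul_apply] using h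
    have hrow : B u' v = B u' v' := by
      refine hcol (fun w => B u' w) ?_ v v'
      funext w
      have h : (B * A) u' w = (lam 0 • B) u' w := by rw [hBA, hAB]
      rw [Matrix.mul_apply] at h
      simp only [Matrix.smul_apply, smul_eq_mul] at h
      simp only [Matrix.mulVec, dotProduct, Pi.smul_apply, smul_eq_mul]
      rw [← h]
      exact Finset.sum_congr rfl fun k _ => by rw [hAsymm w k, mul_comm]
    rw [hcolv, hrow]
  -- value of B
  have hA1 : A *ᵥ (fun _ => (1:ℝ)) = lam 0 • (fun _ => (1:ℝ)) := by
    funext v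
    show (G.adjMatrix ℝ *ᵥ Function.const V (1:ℝ)) v = _
    rw [SimpleGraph.adjMatrix_mulVec_const_apply_of_regular hreg]
    simp [hlam0]
  have hones : ∀ p : ℝ[X], (aeval A p) *ᵥ (fun _ => (1:ℝ)) = p.eval (lam 0) • (fun _ => (1:ℝ)) := by
    have hpow : ∀ k : ℕ, (A ^ k) *ᵥ (fun _ => (1:ℝ)) = (lam 0)^k • (fun _ => (1:ℝ)) := by
      intro k
      induction k with
      | zero => simp
      | succ k ih =>
        rw [pow_succ, ← Matrix.mulVec_mulVec, hA1, Matrix.mulVec_smul, ih, smul_smul, pow_succ,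
          mul_comm]
    intro p
    induction p using Polynomial.induction_on' with
    | add p q hp hq => rw [map_add, Matrix.add_mulVec, hp, hq, eval_add, add_smul]
    | monomial k a =>
      rw [aeval_monomial, ← Matrix.mulVec_mulVec, hpow, Matrix.mulVec_smul]
      have hmap : (algebraMap ℝ (Matrix V V ℝ)) a *ᵥ (fun _ => (1:ℝ)) = a • (fun _ => (1:ℝ)) := by
        rw [Matrix.algebraMap_eq_diagonal]
        funext i
        simp [Matrix.mulVec_diagonal]
      rw [hmap, smul_smul, eval_monomial, mul_comm]
  have hPval : P.eval (lam 0) = π₀ := by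
    rw [hπ₀, hPdef]
    simp [eval_prod]
  have hn0 : (n:ℝ) ≠ 0 := by
    have hc : 0 < n := hn ▸ Fintype.card_pos
    positivity
  have hc : ∀ u v : V, B u v = π₀ / n := by
    intro u v
    have hsum : ∑ w : V, B u w = π₀ := by
      have h := congrFun (hones P) u
      simp only [Matrix.mulVec, dotProduct, mul_one, Pi.smul_apply, smul_eq_mul] at h
      rw [hBdef]
      rw [hPval] at h
      simpa using h
    have hsum2 : ∑ w : V, B u w = (n : ℝ) * B u v := by
      rw [Finset.sum_congr rfl fun w _ => hconst u w u v]
      simp [hn, Finset.card_univ, mul_comm]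
    rw [eq_div_iff hn0]
    rw [hsum2] at hsum
    linarith
  have hzero : ∀ (k : ℕ) (u v : V), G.dist u v = d → k < d → (A ^ k) u v = 0 := by
    intro k u v hdist hk
    rw [hAdef, SimpleGraph.adjMatrix_pow_apply_eq_card_walk]
    have hE : IsEmpty {p : G.Walk u v // p.length = k} := by
      refine ⟨fun x => ?_⟩
      obtain ⟨p, hp⟩ := x
      have := SimpleGraph.dist_le p
      omega
    simp [Fintype.card_eq_zero]
    exact Finset.eq_empty_of_forall_notMem fun p hp =>
      hE.false ⟨p, (SimpleGraph.mem_finsetWalkLength_iff).mp hp⟩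
  have hentry : ∀ (p : ℝ[X]), p.natDegree < d + 1 → ∀ u v : V, G.dist u v = d →
      (aeval A p) u v = p.coeff d * (A ^ d) u v := by
    intro p hp u v hdist
    rw [aeval_eq_sum_range' hp, Matrix.sum_apply, Finset.sum_eq_single d]
    · simp
    · intro k hk hkd
      have hkd' : k < d := by
        have := Finset.mem_range.mp hk
        omega
      simp [hzero k u v hdist hkd']
    · intro hnotin
      exact absurd (Finset.self_mem_range_succ d) hnotin
  have hAd : ∀ u v : V, G.dist u v = d → (A ^ d) u v = π₀ / n := by
    intro u v hdist
    have h1 : B u v = P.coeff d * (A ^ d) u v := by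
      rw [hBdef]
      exact hentry P (by rw [hPdeg]; omega) u v hdist
    have h2 : P.coeff d = 1 := by
      have hm := hPmonic
      rwa [Polynomial.Monic, Polynomial.leadingCoeff, hPdeg] at hm
    rw [h2, one_mul] at h1
    rw [← h1, hc u v]
  refine ⟨?_, hAd⟩
  intro ℓ u v u' v' h h'
  have key : ∀ a b : V, G.dist a b = d → (A ^ ℓ) a b = (X ^ ℓ %ₘ Q).coeff d * (π₀ / n) := by
    intro a b hab
    have hQne1 : Q ≠ 1 := by
      intro hq
      rw [hq, natDegree_one] at hQdeg
      omega
    have hdeg : (X ^ ℓ %ₘ Q).natDegree < d + 1 := by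
      have hlt := natDegree_modByMonic_lt (X ^ ℓ) hQmonic hQne1
      rw [hQdeg] at hlt
      omega
    have hmod : aeval A (X ^ ℓ %ₘ Q) = A ^ ℓ := by
      rw [aeval_modByMonic_eq_self_of_root hQA, map_pow, aeval_X]
    calc (A ^ ℓ) a b = (aeval A (X ^ ℓ %ₘ Q)) a b := by rw [hmod]
      _ = (X ^ ℓ %ₘ Q).coeff d * (A ^ d) a b := hentry _ hdeg a b hab
      _ = _ := by rw [hAd a b hab]
  rw [key u v h, key u' v' h']
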